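/- Assume v : ℝ≥0 → ℝ is C¹ with v' < 0 on (0,∞). Let Rᵢ(t), i = 1,...,n−2, be positive C¹ functions solving Ṙᵢ = −(Rᵢ²/ℓ)[v(R_{i+1}) − v(Rᵢ)] for i ≤ n−3 and Ṙ_{n−2} = −(R_{n−2}²/ℓ)[v(0) − v(R_{n−2})]. Define the discrete total variation T(t) = R₁(t) + R_{n−2}(t) + Σ_{i=1}^{n−3} |Rᵢ(t) − R_{i+1}(t)|. Then T is non-increasing in t. -/

import Mathlib

open Set Filter Asymptotics

private lemma sign_mul_self_eq_abs (r : ℝ) : Real.sign r * r = |r| := by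
  rcases lt_trichotomy r 0 with h | h | h
  · rw [Real.sign_of_neg h, abs_of_neg h]; ring
  · simp [h]
  · rw [Real.sign_of_pos h, abs_of_pos h]; ring

private lemma abs_sign_le_one (r : ℝ) : |Real.sign r| ≤ 1 := by
  rcases lt_trichotomy r 0 with h | h | h
  · rw [Real.sign_of_neg h]; norm_num
  · simp [h]
  · rw [Real.sign_of_pos h]; norm_num

/-- Right derivative of `|g|` at a zero of `g` is `|g'|`. -/
private lemma abs_hasDerivWithinAt_of_zero {g : ℝ → ℝ} {g' x : ℝ}
    (h : HasDerivAt g g' x) (hx : g x = 0) :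
    HasDerivWithinAt (fun y => |g y|) |g'| (Ici x) x := by
  have h1 := (h.hasDerivWithinAt (s := Ici x))
  rw [hasDerivWithinAt_iff_isLittleO] at h1 ⊢
  have hO : (fun y => |g y| - |g x| - (y - x) • |g'|) =O[nhdsWithin x (Ici x)]
      (fun y => g y - g x - (y - x) • g') := by
    apply IsBigO.of_bound 1
    filter_upwards [self_mem_nhdsWithin] with y (hy : x ≤ y)
    simp only [hx, abs_zero, sub_zero, one_mul, Real.norm_eq_abs, smul_eq_mul]
    calc |(|g y| - (y - x) * |g'|)|
        = |(|g y| - |(y - x) * g'|)| := by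
          rw [abs_mul, abs_of_nonneg (by linarith : (0:ℝ) ≤ y - x)]
      _ ≤ |g y - (y - x) * g'| := abs_abs_sub_abs_le_abs_sub (g y) ((y - x) * g')
  exact hO.trans_isLittleO h1

/-- Right derivative of `|g|` in all cases, with a sign factor. -/
private lemma abs_hasDerivWithinAt {g : ℝ → ℝ} {g' x : ℝ} (h : HasDerivAt g g' x) :
    HasDerivWithinAt (fun y => |g y|)
      ((if g x ≠ 0 then Real.sign (g x) else Real.sign g') * g') (Ici x) x := by
  rcases lt_trichotomy (g x) 0 with hx | hx | hx
  · rw [if_pos hx.ne, Real.sign_of_neg hx]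
    have hev : (fun y => |g y|) =ᶠ[nhds x] (fun y => -g y) := by
      filter_upwards [h.continuousAt.eventually_lt_const hx] with y hy
      exact abs_of_neg hy
    have h2 : HasDerivAt (fun y => |g y|) (-g') x :=
      h.neg.congr_of_eventuallyEq hev
    have h3 : (-1 : ℝ) * g' = -g' := by ring
    rw [h3]
    exact h2.hasDerivWithinAt
  · rw [if_neg (by simp [hx]), sign_mul_self_eq_abs]
    exact abs_hasDerivWithinAt_of_zero h hx
  · rw [if_pos hx.ne', Real.sign_of_pos hx, one_mul]
    have hev : (fun y => |g y|) =ᶠ[nhds x] g := by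
      filter_upwards [h.continuousAt.eventually_const_lt hx] with y hy
      exact abs_of_pos hy
    exact (h.congr_of_eventuallyEq hev).hasDerivWithinAt

private lemma telescope_Icc (F : ℕ → ℝ) (m : ℕ) :
    ∑ i ∈ Finset.Icc 1 m, (F (i + 1) - F i) = F (m + 1) - F 1 := by
  induction m with
  | zero => simp
  | succ k ih => rw [Finset.sum_Icc_succ_top (by omega), ih]; ring

/-- BV contraction: the discrete total variation
`T(t) = R₁(t) + R_{n-2}(t) + Σ_{i=1}^{n-3} |Rᵢ(t) - R_{i+1}(t)|`
is non-increasing along the discrete density ODE system. -/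
theorem ftl_discrete_BV_contraction
    (v : ℝ → ℝ) (hv : ContDiffOn ℝ 1 v (Set.Ici 0))
    (hv' : ∀ ρ : ℝ, 0 < ρ → deriv v ρ < 0)
    (ℓ : ℝ) (hℓ : 0 < ℓ) (n : ℕ) (hn : 3 ≤ n)
    (Rd : ℕ → ℝ → ℝ)
    (hpos : ∀ t ≥ (0:ℝ), ∀ i, 1 ≤ i → i ≤ n - 2 → 0 < Rd i t)
    (hC1 : ∀ i, 1 ≤ i → i ≤ n - 2 → ContDiff ℝ 1 (Rd i))
    (hode : ∀ t ≥ (0:ℝ), ∀ i, 1 ≤ i → i ≤ n - 3 →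
      HasDerivAt (Rd i) (-(Rd i t)^2 / ℓ * (v (Rd (i+1) t) - v (Rd i t))) t)
    (hlast : ∀ t ≥ (0:ℝ),
      HasDerivAt (Rd (n-2)) (-(Rd (n-2) t)^2 / ℓ * (v 0 - v (Rd (n-2) t))) t)
    (T : ℝ → ℝ)
    (hT : ∀ t, T t = Rd 1 t + Rd (n-2) t
      + ∑ i ∈ Finset.Icc 1 (n-3), |Rd i t - Rd (i+1) t|) :
    ∀ s t : ℝ, 0 ≤ s → s ≤ t → T t ≤ T s := by
  classical
  have hanti : StrictAntiOn v (Set.Ici 0) := by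
    apply strictAntiOn_of_deriv_neg (convex_Ici 0) hv.continuousOn
    intro x hx
    rw [interior_Ici] at hx
    exact hv' x hx
  set m := n - 3 with hm
  have hm2 : m + 1 = n - 2 := by omega
  have h1n2 : 1 ≤ n - 2 := by omega
  set a' : ℕ → ℝ → ℝ := fun i x =>
    if i = n - 2 then -(Rd (n-2) x)^2 / ℓ * (v 0 - v (Rd (n-2) x))
    else -(Rd i x)^2 / ℓ * (v (Rd (i+1) x) - v (Rd i x)) with ha'
  set σf : ℕ → ℝ → ℝ := fun i x =>
    if (Rd i x - Rd (i+1) x) ≠ 0 then Real.sign (Rd i x - Rd (i+1) x)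
    else Real.sign (a' i x - a' (i+1) x) with hσf
  set D : ℝ → ℝ := fun x =>
    a' 1 x + a' (n-2) x + ∑ i ∈ Finset.Icc 1 m, σf i x * (a' i x - a' (i+1) x) with hD
  -- derivative facts
  have hda : ∀ x : ℝ, 0 ≤ x → ∀ i, 1 ≤ i → i ≤ n - 2 → HasDerivAt (Rd i) (a' i x) x := by
    intro x hx i hi1 hi2
    by_cases h : i = n - 2
    · have : a' i x = -(Rd (n-2) x)^2 / ℓ * (v 0 - v (Rd (n-2) x)) := by
        simp only [ha', if_pos h]
      rw [this, h]
      exact hlast x hx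
    · have : a' i x = -(Rd i x)^2 / ℓ * (v (Rd (i+1) x) - v (Rd i x)) := by
        simp only [ha', if_neg h]
      rw [this]
      exact hode x hx i hi1 (by omega)
  -- sign fact
  have hA : ∀ x : ℝ, 0 ≤ x → ∀ i, 1 ≤ i → i ≤ m → σf i x * a' i x = -|a' i x| := by
    intro x hx i hi1 hi2
    have hine : i ≠ n - 2 := by omega
    have hRi : 0 < Rd i x := hpos x hx i hi1 (by omega)
    have hRi1 : 0 < Rd (i+1) x := hpos x hx (i+1) (by omega) (by omega)
    have hP : 0 < (Rd i x)^2 / ℓ := by positivity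
    have ha'i : a' i x = -(Rd i x)^2 / ℓ * (v (Rd (i+1) x) - v (Rd i x)) := by
      simp only [ha', if_neg hine]
    rcases lt_trichotomy (Rd i x - Rd (i+1) x) 0 with hc | hc | hc
    · have hvlt : v (Rd (i+1) x) < v (Rd i x) :=
        hanti (mem_Ici.mpr hRi.le) (mem_Ici.mpr hRi1.le) (by linarith)
      have hapos : 0 < a' i x := by
        have key : 0 < Rd i x ^ 2 / ℓ * (v (Rd i x) - v (Rd (i+1) x)) :=
          mul_pos hP (by linarith)
        have e : -Rd i x ^ 2 / ℓ * (v (Rd (i+1) x) - v (Rd i x))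
            = Rd i x ^ 2 / ℓ * (v (Rd i x) - v (Rd (i+1) x)) := by ring
        rw [ha'i, e]; exact key
      have hσ : σf i x = -1 := by
        simp only [hσf, if_pos hc.ne, Real.sign_of_neg hc]
      rw [hσ, abs_of_pos hapos]; ring
    · have heq : Rd i x = Rd (i+1) x := by linarith
      have haz : a' i x = 0 := by rw [ha'i, heq]; ring
      rw [haz]; simp
    · have hvlt : v (Rd i x) < v (Rd (i+1) x) :=
        hanti (mem_Ici.mpr hRi1.le) (mem_Ici.mpr hRi.le) (by linarith)
      have haneg : a' i x < 0 := by
        have key : 0 < Rd i x ^ 2 / ℓ * (v (Rd (i+1) x) - v (Rd i x)) :=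
          mul_pos hP (by linarith)
        have e : -Rd i x ^ 2 / ℓ * (v (Rd (i+1) x) - v (Rd i x))
            = -(Rd i x ^ 2 / ℓ * (v (Rd (i+1) x) - v (Rd i x))) := by ring
        rw [ha'i, e]; linarith
      have hσ : σf i x = 1 := by
        simp only [hσf, if_pos hc.ne', Real.sign_of_pos hc]
      rw [hσ, abs_of_neg haneg]; ring
  have hsig : ∀ i x, |σf i x| ≤ 1 := by
    intro i x
    simp only [hσf]
    split <;> exact abs_sign_le_one _
  have hBneg : ∀ x : ℝ, 0 ≤ x → a' (n-2) x ≤ 0 := by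
    intro x hx
    have hR : 0 < Rd (n-2) x := hpos x hx (n-2) h1n2 le_rfl
    have hv0 : v (Rd (n-2) x) < v 0 :=
      hanti (mem_Ici.mpr le_rfl) (mem_Ici.mpr hR.le) hR
    have hP : 0 < (Rd (n-2) x)^2 / ℓ := by positivity
    have : a' (n-2) x = -(Rd (n-2) x)^2 / ℓ * (v 0 - v (Rd (n-2) x)) := by
      simp only [ha', if_pos rfl]
    have key : 0 < Rd (n-2) x ^ 2 / ℓ * (v 0 - v (Rd (n-2) x)) :=
      mul_pos hP (by linarith)
    have e : -Rd (n-2) x ^ 2 / ℓ * (v 0 - v (Rd (n-2) x))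
        = -(Rd (n-2) x ^ 2 / ℓ * (v 0 - v (Rd (n-2) x))) := by ring
    rw [this, e]; linarith
  -- bound on D
  have hDle : ∀ x : ℝ, 0 ≤ x → D x ≤ 0 := by
    intro x hx
    have hsum : ∑ i ∈ Finset.Icc 1 m, σf i x * (a' i x - a' (i+1) x)
        ≤ ∑ i ∈ Finset.Icc 1 m, (|a' (i+1) x| - |a' i x|) := by
      apply Finset.sum_le_sum
      intro i hi
      rw [Finset.mem_Icc] at hi
      have h1 := hA x hx i hi.1 hi.2
      have h2 : |σf i x * a' (i+1) x| ≤ |a' (i+1) x| := by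
        rw [abs_mul]
        exact mul_le_of_le_one_left (abs_nonneg _) (hsig i x)
      have h3 := (abs_le.mp h2).1
      nlinarith [h1, h3]
    have htel := telescope_Icc (fun i => |a' i x|) m
    rw [hm2] at htel
    have h1 : a' 1 x ≤ |a' 1 x| := le_abs_self _
    have h2 := hBneg x hx
    have habs2 : |a' (n-2) x| = -(a' (n-2) x) := abs_of_nonpos h2
    simp only [hD]
    have hs2 : ∑ i ∈ Finset.Icc 1 m, σf i x * (a' i x - a' (i+1) x)
        ≤ |a' (n-2) x| - |a' 1 x| := by
      refine hsum.trans (le_of_eq ?_)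
      simpa using htel
    linarith
  -- T and its right derivative
  have hTeq : T = fun t => Rd 1 t + Rd (n-2) t
      + ∑ i ∈ Finset.Icc 1 m, |Rd i t - Rd (i+1) t| := funext hT
  have hTd : ∀ x : ℝ, 0 ≤ x → HasDerivWithinAt T (D x) (Ici x) x := by
    intro x hx
    rw [hTeq]
    simp only [hD]
    refine (((hda x hx 1 le_rfl h1n2).hasDerivWithinAt.add
      (hda x hx (n-2) h1n2 le_rfl).hasDerivWithinAt).add
      (HasDerivWithinAt.fun_sum fun i hi => ?_))
    rw [Finset.mem_Icc] at hi
    have hgd : HasDerivAt (fun t => Rd i t - Rd (i+1) t) (a' i x - a' (i+1) x) x :=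
      (hda x hx i hi.1 (by omega)).sub (hda x hx (i+1) (by omega) (by omega))
    have h5 := abs_hasDerivWithinAt hgd
    have hσ : σf i x = (if (Rd i x - Rd (i+1) x) ≠ 0 then Real.sign (Rd i x - Rd (i+1) x)
        else Real.sign (a' i x - a' (i+1) x)) := by simp only [hσf]
    rw [hσ]
    exact h5
  have hTc : Continuous T := by
    rw [hTeq]
    refine (((hC1 1 le_rfl h1n2).continuous.add
      (hC1 (n-2) h1n2 le_rfl).continuous).add
      (continuous_finset_sum _ fun i hi => ?_))
    rw [Finset.mem_Icc] at hi
    exact ((hC1 i hi.1 (by omega)).continuous.sub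
      ((hC1 (i+1) (by omega) (by omega)).continuous)).abs
  intro s t hs hst
  have key := image_le_of_deriv_right_le_deriv_boundary (f := T) (f' := D) (a := s) (b := t)
    (B := fun _ => T s) (B' := fun _ => 0)
    hTc.continuousOn
    (fun x hx => hTd x (le_trans hs hx.1))
    le_rfl
    continuousOn_const
    (fun x _ => hasDerivWithinAt_const x _ (T s))
    (fun x hx => hDle x (le_trans hs hx.1))
  exact key (right_mem_Icc.mpr hst)
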